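/- (Action of the complement involution on γ-Schur functions) Let γ be a composition of n and α ≤ γ. Let ζ be the composition with D(ζ) = (D(γ^c) \ D(α)) ∪ D(γ). Then the algebra involution ω^c of Sym_nc defined by ω^c(R_β) = R_{β^c} satisfies ω^c(R_α^{(γ)}(t)) = t^{n(γ)} R_ζ^{(γ)}(1/t). -/

import Mathlib

open Finset

noncomputable section

/-- The field `ℚ(t)` (which contains `1/t`). -/
abbrev Ft : Type := RatFunc ℚ

/-- The variable `t`. -/
def tt : Ft := RatFunc.X

/-- Descent sets of compositions of `n` are subsets of `{1,...,n-1}`. -/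
def ground (n : ℕ) : Finset ℕ := Finset.Icc 1 (n - 1)

/-- `c(α,β) = Σ_{i ∈ D(α) ∩ D(β)} i`. -/
def cstat (A B : Finset ℕ) : ℕ := ∑ i ∈ A ∩ B, i

/-- The degree-`n` component of `Sym_nc` as the free module with basis the ribbon
Schur functions `R_β`, indexed by descent sets. -/
def Rib : Finset ℕ → (Finset ℕ →₀ Ft) := fun B => Finsupp.single B 1

/-- `γ`-ribbon Schur functions with parameter `u`:
`R_α^{(γ)}(u) = Σ_{β ≥ α, D(α)\D(β) ⊆ D(γ)} u^{c(α,β^c)} R_β`. -/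
def gSchur (n : ℕ) (G A : Finset ℕ) (u : Ft) : Finset ℕ →₀ Ft :=
  ∑ B ∈ A.powerset.filter (fun B => A \ B ⊆ G), (u ^ cstat A (ground n \ B)) • Rib B

/-- The involution `ω^c` of (the degree-`n` component of) `Sym_nc`,
defined by `ω^c(R_β) = R_{β^c}`. -/
def omegaC (n : ℕ) : (Finset ℕ →₀ Ft) →ₗ[Ft] (Finset ℕ →₀ Ft) :=
  Finsupp.lmapDomain Ft Ft (fun B => ground n \ B)

lemma tt_ne_zero : tt ≠ 0 := RatFunc.X_ne_zero

/-- For `α ≤ γ` compositions of `n` and `ζ` with `D(ζ) = (D(γ^c)\D(α)) ∪ D(γ)`: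
`ω^c(R_α^{(γ)}(t)) = t^{n(γ)} R_ζ^{(γ)}(1/t)`. -/
theorem stmt11 (n : ℕ) (G A : Finset ℕ)
    (hA : A ⊆ ground n) (hGA : G ⊆ A) :
    omegaC n (gSchur n G A tt)
      = (tt ^ (∑ i ∈ G, i)) • gSchur n G (((ground n \ G) \ A) ∪ G) tt⁻¹ := by
  classical
  set g := ground n with hg
  have hZeq : ((g \ G) \ A) ∪ G = (g \ A) ∪ G := by
    ext i
    simp only [mem_union, mem_sdiff]
    constructor
    · rintro (⟨⟨h1, h2⟩, h3⟩ | h); exact Or.inl ⟨h1, h3⟩; exact Or.inr h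
    · rintro (⟨h1, h3⟩ | h)
      · exact Or.inl ⟨⟨h1, fun hG => h3 (hGA hG)⟩, h3⟩
      · exact Or.inr h
  set Z := (g \ A) ∪ G with hZdef
  rw [hZeq]
  have hZg : Z ⊆ g := union_subset (sdiff_subset) (hGA.trans hA)
  rw [gSchur, gSchur, map_sum, Finset.smul_sum]
  refine Finset.sum_nbij' (fun B => g \ B) (fun C => g \ C) ?_ ?_ ?_ ?_ ?_
  · -- membership forward
    intro B hB
    simp only [mem_filter, mem_powerset] at hB ⊢
    obtain ⟨hBA, hABG⟩ := hB
    constructor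
    · intro i hi
      simp only [mem_sdiff] at hi
      by_cases hiA : i ∈ A
      · exact mem_union_right _ (hABG (mem_sdiff.mpr ⟨hiA, hi.2⟩))
      · exact mem_union_left _ (mem_sdiff.mpr ⟨hi.1, hiA⟩)
    · intro i hi
      simp only [mem_sdiff, hZdef, mem_union, not_and, not_not] at hi
      obtain ⟨h1, h2⟩ := hi
      rcases h1 with ⟨hig, hiA⟩ | hiG
      · exact absurd (hBA (h2 hig)) hiA
      · exact hiG
  · -- membership backward
    intro C hC
    simp only [mem_filter, mem_powerset] at hC ⊢
    obtain ⟨hCZ, hZCG⟩ := hC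
    have hgAC : g \ A ⊆ C := by
      intro i hi
      by_contra hiC
      have : i ∈ Z \ C := mem_sdiff.mpr ⟨mem_union_left _ hi, hiC⟩
      have := hZCG this
      exact (mem_sdiff.mp hi).2 (hGA this)
    constructor
    · intro i hi
      simp only [mem_sdiff] at hi
      by_contra hiA
      exact hi.2 (hgAC (mem_sdiff.mpr ⟨hi.1, hiA⟩))
    · intro i hi
      simp only [mem_sdiff, not_not] at hi
      have hiC : i ∈ C := by
        by_contra hiC
        exact hi.2 ⟨hA hi.1, hiC⟩
      rcases mem_union.mp (hCZ hiC) with h | h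
      · exact absurd hi.1 (mem_sdiff.mp h).2
      · exact h
  · intro B hB
    simp only [mem_filter, mem_powerset] at hB
    show g \ (g \ B) = B
    rw [sdiff_sdiff_self_left, inter_eq_right.mpr (hB.1.trans hA)]
  · intro C hC
    simp only [mem_filter, mem_powerset] at hC
    show g \ (g \ C) = C
    rw [sdiff_sdiff_self_left, inter_eq_right.mpr (hC.1.trans hZg)]
  · -- summands match
    intro B hB
    simp only [mem_filter, mem_powerset] at hB
    obtain ⟨hBA, hABG⟩ := hB
    have hBg : B ⊆ g := hBA.trans hA
    have hdd : g \ (g \ B) = B := by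
      rw [sdiff_sdiff_self_left, inter_eq_right.mpr hBg]
    have homega : omegaC n ((tt ^ cstat A (g \ B)) • Rib B)
        = (tt ^ cstat A (g \ B)) • Rib (g \ B) := by
      rw [map_smul]
      congr 1
      simp only [omegaC, Rib, Finsupp.lmapDomain_apply, Finsupp.mapDomain_single]
      rw [hg]
    rw [homega, hdd, smul_smul]
    -- exponent identity
    have key : cstat A (g \ B) + cstat Z B = ∑ i ∈ G, i := by
      have h1 : A ∩ (g \ B) = A \ B := by
        ext i; simp only [mem_inter, mem_sdiff]
        exact ⟨fun ⟨h, _, h2⟩ => ⟨h, h2⟩, fun ⟨h, h2⟩ => ⟨h, hA h, h2⟩⟩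
      have h2 : Z ∩ B = G ∩ B := by
        ext i
        simp only [hZdef, mem_inter, mem_union, mem_sdiff]
        constructor
        · rintro ⟨⟨_, hiA⟩ | hG, hB'⟩
          · exact absurd (hBA hB') hiA
          · exact ⟨hG, hB'⟩
        · rintro ⟨hG, hB'⟩; exact ⟨Or.inr hG, hB'⟩
      have h3 : G = (A \ B) ∪ (G ∩ B) := by
        ext i
        simp only [mem_union, mem_sdiff, mem_inter]
        constructor
        · intro hi
          by_cases hiB : i ∈ B
          · exact Or.inr ⟨hi, hiB⟩
          · exact Or.inl ⟨hGA hi, hiB⟩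
        · rintro (h | h)
          · exact hABG (mem_sdiff.mpr h)
          · exact h.1
      have hdisj : Disjoint (A \ B) (G ∩ B) := by
        rw [Finset.disjoint_left]
        rintro i hi hi2
        exact (mem_sdiff.mp hi).2 (mem_inter.mp hi2).2
      rw [cstat, cstat, h1, h2, ← Finset.sum_union hdisj, ← h3]
    have hle : cstat Z B ≤ ∑ i ∈ G, i := by omega
    congr 1
    rw [inv_pow, eq_comm, mul_inv_eq_iff_eq_mul₀ (pow_ne_zero _ tt_ne_zero),
        ← pow_add, key]
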